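/- Let A be a complete, cocomplete category with stable monomorphisms and split epimorphisms, and let D be a diagram of monads with weakly terminal object T_j. Then the category C_D of joint Eilenberg–Moore algebras for D is isomorphic, over A, to the full subcategory C of the Eilenberg–Moore category of T_j consisting of those algebras a : T_j A → A satisfying a ∘ f_A = a ∘ g_A for every parallel pair f, g : T_i → T_j of connecting morphisms in D. -/

import Mathlib

open CategoryTheory CategoryTheory.Limits

universe v u

/-- A cocomplete category has *stable monomorphisms* if coproducts of parallel
collections of monomorphisms are monic, and colimits of chains of monomorphisms
consist of monics, with the map induced by any cocone of monics being monic. -/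
structure StableMonos (A : Type u) [Category.{v} A] [HasColimits A] : Prop where
  /-- coproducts of parallel collections of monomorphisms are monic -/
  sigma_map_mono : ∀ {ι : Type v} {X Y : ι → A} (f : ∀ i, X i ⟶ Y i),
    (∀ i, Mono (f i)) → Mono (Limits.Sigma.map f)
  /-- the binary instance of the previous condition -/
  coprod_map_mono : ∀ {X X' Y Y' : A} (f : X ⟶ Y) (g : X' ⟶ Y'),
    Mono f → Mono g → Mono (Limits.coprod.map f g)
  /-- colimits of chains of monomorphisms consist of monics -/
  chain_colimit_mono : ∀ {J : Type v} [LinearOrder J] (D : J ⥤ A),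
    (∀ (i j : J) (h : i ⟶ j), Mono (D.map h)) → ∀ j : J, Mono (Limits.colimit.ι D j)
  /-- the map induced by a cocone of monics on the colimit of a chain of monics is monic -/
  chain_desc_mono : ∀ {J : Type v} [LinearOrder J] (D : J ⥤ A)
    (_ : ∀ (i j : J) (h : i ⟶ j), Mono (D.map h))
    (c : Limits.Cocone D), (∀ j : J, Mono (c.ι.app j)) → Mono (Limits.colimit.desc D c)

variable {A : Type u} [Category.{v} A] {J : Type v} [SmallCategory J]

/-- A joint Eilenberg–Moore algebra for a diagram `D` of monads: an object equipped
with an Eilenberg–Moore algebra structure for each monad in the diagram, compatible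
with all connecting morphisms. -/
structure JointAlgebra (D : J ⥤ Monad A) where
  pt : A
  act : ∀ i : J, (D.obj i).toFunctor.obj pt ⟶ pt
  unit : ∀ i : J, (D.obj i).η.app pt ≫ act i = 𝟙 pt
  assoc : ∀ i : J, (D.obj i).toFunctor.map (act i) ≫ act i =
    (D.obj i).μ.app pt ≫ act i
  compat : ∀ {i i' : J} (f : i ⟶ i'), (D.map f).toNatTrans.app pt ≫ act i' = act i

/-- Morphisms of joint algebras: morphisms of `A` which are simultaneously
homomorphisms for every monad in the diagram. -/
@[ext]
structure JointAlgebraHom {D : J ⥤ Monad A} (X Y : JointAlgebra D) where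
  f : X.pt ⟶ Y.pt
  comm : ∀ i : J, (D.obj i).toFunctor.map f ≫ Y.act i = X.act i ≫ f

instance jointAlgebraCategory (D : J ⥤ Monad A) : Category (JointAlgebra D) where
  Hom X Y := JointAlgebraHom X Y
  id X := ⟨𝟙 X.pt, by intro i; simp⟩
  comp g h := ⟨g.f ≫ h.f, by
    intro i
    rw [Functor.map_comp, Category.assoc, h.comm, ← Category.assoc, g.comm,
      Category.assoc]⟩
  id_comp f := by apply JointAlgebraHom.ext; simp [CategoryStruct.id, CategoryStruct.comp]
  comp_id f := by apply JointAlgebraHom.ext; simp [CategoryStruct.id, CategoryStruct.comp]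
  assoc f g h := by apply JointAlgebraHom.ext; simp [CategoryStruct.comp]

/-- The forgetful functor from joint algebras to the base category. -/
def jointForget (D : J ⥤ Monad A) : JointAlgebra D ⥤ A where
  obj X := X.pt
  map f := f.f
  map_id X := rfl
  map_comp f g := rfl

/-- The predicate cutting out the full subcategory `C` of Eilenberg–Moore algebras
for `D.obj j`: those algebras equalizing all pairs of connecting morphisms into `j`. -/
def equalizingAlgebra (D : J ⥤ Monad A) (j : J) : Monad.Algebra (D.obj j) → Prop :=
  fun a => ∀ (i : J) (f g : i ⟶ j),
    (D.map f).toNatTrans.app a.A ≫ a.a = (D.map g).toNatTrans.app a.A ≫ a.a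

section Aux

variable {D : J ⥤ Monad A}

theorem JointAlgebra.ext' {X Y : JointAlgebra D} (h1 : X.pt = Y.pt)
    (h2 : HEq X.act Y.act) : X = Y := by
  cases X; cases Y; cases h1; cases h2; rfl

@[simp] theorem jointHom_comp_f {X Y Z : JointAlgebra D} (g : X ⟶ Y) (h : Y ⟶ Z) :
    (g ≫ h).f = g.f ≫ h.f := rfl

theorem jointAlgebra_eqToHom_f {X Y : JointAlgebra D} (h : X = Y) :
    (eqToHom h : X ⟶ Y).f = eqToHom (congrArg JointAlgebra.pt h) := by
  cases h; rfl

theorem algebra_ext' {T : Monad A} {X Y : Monad.Algebra T} (h1 : X.A = Y.A)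
    (h2 : HEq X.a Y.a) : X = Y := by
  cases X; cases Y; cases h1; cases h2; rfl

theorem fullsub_ext {Z : Monad.Algebra (D.obj j) → Prop} {X Y : ObjectProperty.FullSubcategory Z}
    (h : X.obj = Y.obj) : X = Y := by
  cases X; cases Y; cases h; rfl

theorem fullsub_eqToHom_f {Z : Monad.Algebra (D.obj j) → Prop} {X Y : ObjectProperty.FullSubcategory Z}
    (h : X = Y) :
    (eqToHom h : X ⟶ Y).hom.f
      = eqToHom (congrArg (fun W => (ObjectProperty.FullSubcategory.obj W).A) h) := by
  cases h; rfl

variable (D) (j : J) (hj : ∀ i : J, Nonempty (i ⟶ j))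

/-- Forward functor. -/
def Efun : JointAlgebra D ⥤ ObjectProperty.FullSubcategory (equalizingAlgebra D j) where
  obj X := ⟨⟨X.pt, X.act j, X.unit j, (X.assoc j).symm⟩,
    fun i f g => by simp only [X.compat]⟩
  map {X Y} h := ObjectProperty.homMk ⟨h.f, h.comm j⟩
  map_id X := rfl
  map_comp f g := rfl

/-- Backward functor. -/
noncomputable def E'fun : ObjectProperty.FullSubcategory (equalizingAlgebra D j) ⥤ JointAlgebra D where
  obj X :=
    { pt := X.obj.A
      act := fun i => (D.map (hj i).some).toNatTrans.app X.obj.A ≫ X.obj.a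
      unit := fun i => by
        rw [← Category.assoc, (D.map (hj i).some).app_η, X.obj.unit]
      assoc := fun i => by
        have h1 := (D.map (hj i).some).toNatTrans.naturality X.obj.a
        have h2 := (D.map (hj i).some).app_μ X.obj.A
        have h3 := X.obj.assoc
        calc (D.obj i).toFunctor.map ((D.map (hj i).some).toNatTrans.app X.obj.A ≫ X.obj.a) ≫
              (D.map (hj i).some).toNatTrans.app X.obj.A ≫ X.obj.a
            = (D.obj i).toFunctor.map ((D.map (hj i).some).toNatTrans.app X.obj.A) ≫
              ((D.obj i).toFunctor.map X.obj.a ≫ (D.map (hj i).some).toNatTrans.app X.obj.A) ≫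
              X.obj.a := by
              rw [Functor.map_comp]; simp only [Category.assoc]
          _ = (D.obj i).toFunctor.map ((D.map (hj i).some).toNatTrans.app X.obj.A) ≫
              ((D.map (hj i).some).toNatTrans.app ((D.obj j).toFunctor.obj X.obj.A) ≫
                (D.obj j).toFunctor.map X.obj.a) ≫ X.obj.a := by rw [h1]
          _ = ((D.obj i).toFunctor.map ((D.map (hj i).some).toNatTrans.app X.obj.A) ≫
                (D.map (hj i).some).toNatTrans.app ((D.obj j).toFunctor.obj X.obj.A)) ≫
              (D.obj j).μ.app X.obj.A ≫ X.obj.a := by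
              simp only [Category.assoc]; rw [← h3]
          _ = (D.obj i).μ.app X.obj.A ≫ (D.map (hj i).some).toNatTrans.app X.obj.A ≫ X.obj.a := by
              rw [← Category.assoc, ← h2]; simp only [Category.assoc]
      compat := fun {i i'} f => by
        have h1 : (D.map f).toNatTrans.app X.obj.A ≫ (D.map (hj i').some).toNatTrans.app X.obj.A
            = (D.map (f ≫ (hj i').some)).toNatTrans.app X.obj.A := by
          rw [D.map_comp]; rfl
        rw [← Category.assoc, h1, X.property i (f ≫ (hj i').some) (hj i).some] }
  map {X Y} h :=
    { f := h.hom.f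
      comm := fun i => by
        dsimp only
        rw [← Category.assoc, (D.map (hj i).some).toNatTrans.naturality h.hom.f,
          Category.assoc, h.hom.h, ← Category.assoc] }
  map_id X := rfl
  map_comp f g := rfl

end Aux

/-- For a diagram `D` of monads with weakly terminal object `T_j`, the category of
joint Eilenberg–Moore algebras is isomorphic, over `A`, to the full subcategory of
the Eilenberg–Moore category of `D.obj j` of algebras equalizing all parallel pairs
of connecting morphisms into `j`. -/
theorem stmt12 (hA : HasLimits A) (hA' : HasColimits A) (hst : StableMonos A)
    (hsplit : ∀ {X Y : A} (f : X ⟶ Y), StrongEpi f → IsSplitEpi f)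
    (D : J ⥤ Monad A) (j : J) (hj : ∀ i : J, Nonempty (i ⟶ j)) :
    ∃ (E : JointAlgebra D ⥤ ObjectProperty.FullSubcategory (equalizingAlgebra D j))
      (E' : ObjectProperty.FullSubcategory (equalizingAlgebra D j) ⥤ JointAlgebra D),
      E ⋙ E' = 𝟭 _ ∧ E' ⋙ E = 𝟭 _ ∧
      E ⋙ (ObjectProperty.ι _ ⋙ Monad.forget (D.obj j)) = jointForget D := by
  refine ⟨Efun D j, E'fun D j hj, ?_, ?_, ?_⟩
  · have hobj : ∀ X, (Efun D j ⋙ E'fun D j hj).obj X = (𝟭 (JointAlgebra D)).obj X :=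
      fun X => JointAlgebra.ext' rfl
        (heq_of_eq (funext fun i => X.compat (hj i).some))
    refine CategoryTheory.Functor.ext hobj fun X Y f => ?_
    apply JointAlgebraHom.ext
    rw [jointHom_comp_f, jointHom_comp_f, jointAlgebra_eqToHom_f, jointAlgebra_eqToHom_f]
    show f.f = 𝟙 _ ≫ f.f ≫ 𝟙 _
    simp
  · have hobj : ∀ X, (E'fun D j hj ⋙ Efun D j).obj X
        = (𝟭 (ObjectProperty.FullSubcategory (equalizingAlgebra D j))).obj X := by
      intro X
      refine fullsub_ext (algebra_ext' rfl (heq_of_eq ?_))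
      show (D.map (hj j).some).toNatTrans.app X.obj.A ≫ X.obj.a = X.obj.a
      rw [X.property j (hj j).some (𝟙 j), D.map_id]
      simp
    refine CategoryTheory.Functor.ext hobj fun X Y f => ?_
    apply ObjectProperty.hom_ext
    apply Monad.Algebra.Hom.ext
    show f.hom.f = (eqToHom (hobj X)).hom.f ≫ f.hom.f ≫ (eqToHom (hobj Y).symm).hom.f
    rw [fullsub_eqToHom_f, fullsub_eqToHom_f]
    show f.hom.f = 𝟙 _ ≫ f.hom.f ≫ 𝟙 _
    simp
  · rfl
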